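/- Let (τ_k) be a strictly decreasing sequence of positive real numbers converging to 0. Then there exists a function χ: ℝ → ℝ with χ(0) = 0 that is Lipschitz continuous on ℝ with Lipschitz constant 1, is constant on a neighborhood of each τ_k (hence differentiable at each τ_k with derivative 0), and satisfies lim_{k→∞} χ(τ_k)/τ_k = 1. -/

import Mathlib

open Filter Topology MeasureTheory Set

private lemma aux18tsum (c : ℝ) (hc : 0 ≤ c) (k : ℕ) :
    (∑' j : ℕ, ENNReal.ofReal (2 * (1/2:ℝ)^(k+j) * c))
      ≤ ENNReal.ofReal (4 * (1/2)^k * c) := by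
  have hfun : (fun j : ℕ => 2 * (1/2:ℝ)^(k+j) * c)
      = fun j : ℕ => (2 * (1/2:ℝ)^k * c) * (1/2)^j := by
    funext j
    rw [pow_add]
    ring
  have hsummable : Summable (fun j : ℕ => 2 * (1/2:ℝ)^(k+j) * c) := by
    rw [hfun]
    exact (summable_geometric_of_lt_one (by norm_num) (by norm_num)).mul_left _
  rw [← ENNReal.ofReal_tsum_of_nonneg (fun j => by positivity) hsummable]
  apply ENNReal.ofReal_le_ofReal
  rw [hfun, tsum_mul_left, tsum_geometric_of_lt_one (by norm_num) (by norm_num)]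
  have h6 : (1 - (1/2:ℝ))⁻¹ = 2 := by norm_num
  rw [h6]
  ring_nf
  exact le_refl _

/-- given a strictly decreasing positive sequence `τ k → 0`, there
is a function `χ : ℝ → ℝ` with `χ 0 = 0`, Lipschitz with constant 1, locally
constant around each `τ k` (hence differentiable there with derivative 0), and
with `χ (τ k) / τ k → 1`. -/
theorem statement18 (τ : ℕ → ℝ) (hpos : ∀ k, 0 < τ k) (hanti : StrictAnti τ)
    (hlim : Tendsto τ atTop (𝓝 0)) :
    ∃ χ : ℝ → ℝ, χ 0 = 0 ∧ LipschitzWith 1 χ ∧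
      (∀ k, ∀ᶠ t in 𝓝 (τ k), χ t = χ (τ k)) ∧
      (∀ k, HasDerivAt χ 0 (τ k)) ∧
      Tendsto (fun k => χ (τ k) / τ k) atTop (𝓝 1) := by
  -- half-width of the flat interval around `τ k`
  set ε : ℕ → ℝ := fun k => min ((1/2)^k * τ k) ((τ k - τ (k+1))/2) with hε
  have hεpos : ∀ k, 0 < ε k := by
    intro k
    refine lt_min (mul_pos (by positivity) (hpos k)) ?_
    have := hanti (Nat.lt_succ_self k)
    linarith
  have hεle1 : ∀ k, ε k ≤ (1/2)^k * τ k := fun k => min_le_left _ _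
  have hεle2 : ∀ k, ε k ≤ (τ k - τ (k+1))/2 := fun k => min_le_right _ _
  set U : Set ℝ := ⋃ k, Ioo (τ k - ε k) (τ k + ε k) with hU
  have hUopen : IsOpen U := isOpen_iUnion fun k => isOpen_Ioo
  set f : ℝ → ℝ := Uᶜ.indicator (fun _ => 1) with hf
  have hf0 : ∀ s ∈ U, f s = 0 := by
    intro s hs
    simp [hf, Set.indicator_of_notMem, hs]
  have hf_nonneg : ∀ s, 0 ≤ f s := by
    intro s; by_cases h : s ∈ Uᶜ <;> simp [hf, h]
  have hf_le : ∀ s, f s ≤ 1 := by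
    intro s; by_cases h : s ∈ Uᶜ <;> simp [hf, h]
  have hf_int : ∀ a b : ℝ, IntervalIntegrable f volume a b := by
    intro a b
    rw [intervalIntegrable_iff]
    exact (integrableOn_const measure_Ioc_lt_top.ne).indicator
      hUopen.measurableSet.compl
  set χ : ℝ → ℝ := fun t => ∫ s in (0:ℝ)..t, f s with hχ
  have hχ0 : χ 0 = 0 := intervalIntegral.integral_same
  have hχsub : ∀ s t : ℝ, χ s - χ t = ∫ u in t..s, f u := by
    intro s t
    rw [hχ]
    exact intervalIntegral.integral_interval_sub_left (hf_int 0 s) (hf_int 0 t)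
  have hlip : LipschitzWith 1 χ := by
    refine LipschitzWith.of_dist_le_mul fun s t => ?_
    rw [Real.dist_eq, Real.dist_eq, hχsub s t]
    have : ‖∫ u in t..s, f u‖ ≤ 1 * |s - t| := by
      apply intervalIntegral.norm_integral_le_of_norm_le_const
      intro x hx
      rw [Real.norm_eq_abs, abs_le]
      exact ⟨by linarith [hf_nonneg x], hf_le x⟩
    rw [Real.norm_eq_abs] at this
    simpa using this
  have hmem : ∀ k, Ioo (τ k - ε k) (τ k + ε k) ∈ 𝓝 (τ k) := by
    intro k
    exact Ioo_mem_nhds (by linarith [hεpos k]) (by linarith [hεpos k])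
  have hconst : ∀ k, ∀ᶠ t in 𝓝 (τ k), χ t = χ (τ k) := by
    intro k
    filter_upwards [hmem k] with t ht
    have h1 : χ t - χ (τ k) = ∫ u in (τ k)..t, f u := hχsub t (τ k)
    have h2 : (∫ u in (τ k)..t, f u) = 0 := by
      rw [intervalIntegral.integral_congr (g := fun _ => 0)]
      · simp
      · intro x hx
        apply hf0
        have hsub : uIcc (τ k) t ⊆ Ioo (τ k - ε k) (τ k + ε k) := by
          apply Set.OrdConnected.uIcc_subset Set.ordConnected_Ioo
          · constructor <;> [linarith [hεpos k]; linarith [hεpos k]]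
          · exact ht
        exact Set.mem_iUnion.2 ⟨k, hsub hx⟩
    linarith
  have hderiv : ∀ k, HasDerivAt χ 0 (τ k) := by
    intro k
    exact (hasDerivAt_const (τ k) (χ (τ k))).congr_of_eventuallyEq (hconst k)
  refine ⟨χ, hχ0, hlip, hconst, hderiv, ?_⟩
  -- the limit
  have hub : ∀ k, χ (τ k) / τ k ≤ 1 := by
    intro k
    rw [div_le_one (hpos k)]
    calc χ (τ k) = ∫ s in (0:ℝ)..(τ k), f s := rfl
      _ ≤ ∫ s in (0:ℝ)..(τ k), (1:ℝ) := by
          apply intervalIntegral.integral_mono_on (hpos k).le (hf_int _ _)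
            intervalIntegrable_const
          intro x _; exact hf_le x
      _ = τ k := by simp
  have hlb : ∀ k, 1 - 4 * (1/2)^k ≤ χ (τ k) / τ k := by
    intro k
    rw [le_div_iff₀ (hpos k)]
    have key : τ k - χ (τ k) ≤ 4 * (1/2)^k * τ k := by
      have g_int : IntervalIntegrable (U.indicator fun _ => (1:ℝ)) volume 0 (τ k) := by
        rw [intervalIntegrable_iff]
        exact (integrableOn_const measure_Ioc_lt_top.ne).indicator
          hUopen.measurableSet
      have h1 : τ k - χ (τ k) = ∫ s in (0:ℝ)..(τ k), U.indicator (fun _ => (1:ℝ)) s := by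
        have e1 : τ k - χ (τ k)
            = (∫ s in (0:ℝ)..(τ k), (1:ℝ)) - ∫ s in (0:ℝ)..(τ k), f s := by
          simp [hχ]
        rw [e1, ← intervalIntegral.integral_sub intervalIntegrable_const (hf_int _ _)]
        apply intervalIntegral.integral_congr
        intro x _
        by_cases h : x ∈ U <;> simp [hf, h]
      have h2 : (∫ s in (0:ℝ)..(τ k), U.indicator (fun _ => (1:ℝ)) s)
          = (volume (Ioc (0:ℝ) (τ k) ∩ U)).toReal := by
        rw [intervalIntegral.integral_of_le (hpos k).le,
          MeasureTheory.setIntegral_indicator hUopen.measurableSet]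
        simp [Measure.real]
      have hsub : Ioc (0:ℝ) (τ k) ∩ U
          ⊆ ⋃ j, Ioo (τ (k+j) - ε (k+j)) (τ (k+j) + ε (k+j)) := by
        rintro s ⟨hs1, hs2⟩
        obtain ⟨m, hm⟩ := Set.mem_iUnion.1 hs2
        have hkm : k ≤ m := by
          by_contra hlt
          push_neg at hlt
          have h3 : τ (m+1) ≤ τ m - ε m := by
            have := hεle2 m
            have := hεpos m
            linarith
          have h4 : τ k ≤ τ (m+1) := hanti.antitone hlt
          have := hm.1
          have := hs1.2
          linarith
        refine Set.mem_iUnion.2 ⟨m - k, ?_⟩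
        rwa [Nat.add_sub_cancel' hkm]
      have h3 : volume (Ioc (0:ℝ) (τ k) ∩ U)
          ≤ ENNReal.ofReal (4 * (1/2)^k * τ k) := by
        refine (measure_mono hsub).trans ((measure_iUnion_le _).trans ?_)
        have hvol : ∀ j : ℕ, volume (Ioo (τ (k+j) - ε (k+j)) (τ (k+j) + ε (k+j)))
            ≤ ENNReal.ofReal (2 * (1/2)^(k+j) * τ k) := by
          intro j
          rw [Real.volume_Ioo]
          apply ENNReal.ofReal_le_ofReal
          have h5 : ε (k+j) ≤ (1/2)^(k+j) * τ k := by
            refine (hεle1 (k+j)).trans ?_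
            have h7 : τ (k+j) ≤ τ k := hanti.antitone (Nat.le_add_right k j)
            have h8 : (0:ℝ) < (1/2)^(k+j) := pow_pos (by norm_num) _
            nlinarith
          linarith
        exact (ENNReal.tsum_le_tsum hvol).trans (aux18tsum (τ k) (hpos k).le k)
      rw [h1, h2]
      refine ENNReal.toReal_le_of_le_ofReal ?_ h3
      have h8 : (0:ℝ) < (1/2)^k := pow_pos (by norm_num) _
      nlinarith [hpos k]
    have expand : (1 - 4*(1/2:ℝ)^k) * τ k = τ k - 4 * (1/2)^k * τ k := by ring
    rw [expand]
    linarith [key]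
  have htend : Tendsto (fun k : ℕ => (1 - 4 * (1/2:ℝ)^k)) atTop (𝓝 1) := by
    have := tendsto_pow_atTop_nhds_zero_of_lt_one (by norm_num : (0:ℝ) ≤ 1/2)
      (by norm_num : (1:ℝ)/2 < 1)
    have h := (this.const_mul (4:ℝ)).const_sub 1
    simpa using h
  exact tendsto_of_tendsto_of_tendsto_of_le_of_le htend tendsto_const_nhds hlb hub
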